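/- Let P, A, B, s be positive real numbers with s ≤ A / ( P·B·(A + 4B) ). Then for every C ∈ [0,1]: (1/P)·(1−C²) − s·B·( (1−C²) + 2·C·√(1−C²) ) + s·A·C² > 0. -/

import Mathlib

/-- for positive reals `P, A, B, s` with `s ≤ A/(P·B·(A+4B))`, one has
`(1/P)(1−C²) − s·B((1−C²) + 2C√(1−C²)) + s·A·C² > 0` for every `C ∈ [0,1]`. -/
theorem scalar_rayleigh_lower_bound_positive (P A B s : ℝ) (hP : 0 < P) (hA : 0 < A)
    (hB : 0 < B) (hs : 0 < s) (hsle : s ≤ A / (P * B * (A + 4 * B))) :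
    ∀ C ∈ Set.Icc (0 : ℝ) 1,
      0 < (1 / P) * (1 - C ^ 2)
          - s * B * ((1 - C ^ 2) + 2 * C * Real.sqrt (1 - C ^ 2))
          + s * A * C ^ 2 := by
  intro C hC
  obtain ⟨hC0, hC1⟩ := hC
  set t := Real.sqrt (1 - C ^ 2) with htdef
  have hnn : (0:ℝ) ≤ 1 - C ^ 2 := by nlinarith
  have ht0 : 0 ≤ t := Real.sqrt_nonneg _
  have ht2 : t ^ 2 = 1 - C ^ 2 := Real.sq_sqrt hnn
  have hden : 0 < P * B * (A + 4 * B) := by positivity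
  have key : s * (P * B * (A + 4 * B)) ≤ A := by
    rw [le_div_iff₀ hden] at hsle; linarith
  have hPE : 0 < (1 - C ^ 2) - P * (s * B * ((1 - C ^ 2) + 2 * C * t))
      + P * (s * A * C ^ 2) := by
    rcases eq_or_lt_of_le hC1 with h1 | h1
    · have hCeq : C = 1 := h1
      have ht : t = 0 := by rw [htdef, hCeq]; simp
      rw [hCeq, ht]
      ring_nf
      nlinarith [mul_pos (mul_pos hP hs) hA]
    · have hu : 0 < 1 - C ^ 2 := by nlinarith
      have hPs : (0:ℝ) ≤ P * s := by positivity
      have hcross : 2 * C * t * (2 * A * B) ≤ A ^ 2 * C ^ 2 + 4 * B ^ 2 * (1 - C ^ 2) := by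
        nlinarith [sq_nonneg (A * C - 2 * B * t), ht2]
      have h1' := mul_le_mul_of_nonneg_left (mul_le_mul_of_nonneg_left hcross hPs) hB.le
      have h2 := mul_le_mul_of_nonneg_left (mul_le_mul_of_nonneg_right key hu.le) hB.le
      have h3 : 0 < P * s * B ^ 3 * (1 - C ^ 2) := by positivity
      have h4 : (0:ℝ) ≤ P * s * A ^ 2 * B * C ^ 2 := by positivity
      nlinarith [h1', h2, h3, h4, mul_pos hA hB]
  have heq : (1 / P) * (1 - C ^ 2)
      - s * B * ((1 - C ^ 2) + 2 * C * t) + s * A * C ^ 2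
      = (1 / P) * ((1 - C ^ 2) - P * (s * B * ((1 - C ^ 2) + 2 * C * t))
        + P * (s * A * C ^ 2)) := by
    field_simp
  rw [heq]
  exact mul_pos (by positivity) hPE
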